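/- Let p be a univariate real polynomial with natDegree p ≤ 2d. Then p can be written as a finite sum of squares of univariate real polynomials if and only if there exists a positive semidefinite real symmetric matrix Q of size (d+1)×(d+1), indexed by i, j ∈ {0,…,d}, such that for every x ∈ ℝ, p(x) = ∑_{i=0}^{d} ∑_{j=0}^{d} Q_{ij} · x^{i+j}. -/

import Mathlib

open Polynomial Finset Matrix

lemma key_sum (d k : ℕ) (B : Matrix (Fin k) (Fin (d+1)) ℝ) (x : ℝ) :
    ∑ i, (∑ j, B i j * x ^ (j:ℕ))^2 =
      ∑ j : Fin (d+1), ∑ j' : Fin (d+1), (Bᵀ * B) j j' * x ^ ((j:ℕ)+(j':ℕ)) := by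
  simp only [Matrix.mul_apply, Matrix.transpose_apply, pow_two, Finset.sum_mul,
    Finset.mul_sum, pow_add]
  rw [Finset.sum_comm]
  refine Finset.sum_congr rfl fun j _ => ?_
  rw [Finset.sum_comm]
  refine Finset.sum_congr rfl fun j' _ => ?_
  refine Finset.sum_congr rfl fun i _ => ?_
  ring

lemma deg_le (dd : ℕ) (k : ℕ) (g : Fin k → Polynomial ℝ)
    (h : (∑ i, (g i) ^ 2).natDegree ≤ 2 * dd) (i : Fin k) : (g i).natDegree ≤ dd := by
  by_contra hc
  push_neg at hc
  set n := Finset.univ.sup (fun t => (g t).natDegree) with hn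
  have hin : (g i).natDegree ≤ n := Finset.le_sup (f := fun t => (g t).natDegree) (Finset.mem_univ i)
  have hnd : dd < n := lt_of_lt_of_le hc hin
  have hcoeff : ∀ j : Fin k, ((g j)^2).coeff (2*n) = ((g j).coeff n)^2 := by
    intro j
    have hj : (g j).natDegree ≤ n := Finset.le_sup (f := fun t => (g t).natDegree) (Finset.mem_univ j)
    rcases eq_or_lt_of_le hj with he | hl
    · rw [pow_two, pow_two, ← he, two_mul, Polynomial.coeff_mul_degree_add_degree]
      rfl
    · rw [Polynomial.coeff_eq_zero_of_natDegree_lt, Polynomial.coeff_eq_zero_of_natDegree_lt hl]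
      · ring
      · calc ((g j)^2).natDegree ≤ 2 * (g j).natDegree := Polynomial.natDegree_pow_le
          _ < 2 * n := by omega
  have hzero : (∑ i, (g i) ^ 2).coeff (2*n) = 0 :=
    Polynomial.coeff_eq_zero_of_natDegree_lt (lt_of_le_of_lt h (by omega))
  rw [Polynomial.finset_sum_coeff] at hzero
  simp only [hcoeff] at hzero
  have hall : ∀ j : Fin k, ((g j).coeff n)^2 = 0 := by
    intro j
    have := Finset.sum_eq_zero_iff_of_nonneg (fun j _ => sq_nonneg ((g j).coeff n)) |>.mp hzero j (Finset.mem_univ j)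
    exact this
  -- some index attains sup n, n ≥ 1
  obtain ⟨j, -, hj⟩ := Finset.exists_mem_eq_sup Finset.univ ⟨i, Finset.mem_univ i⟩
    (fun i => (g i).natDegree)
  have hgj : (g j).natDegree = n := hj.symm
  have hne : g j ≠ 0 := by
    intro h0
    rw [h0, Polynomial.natDegree_zero] at hgj
    omega
  have := hall j
  rw [pow_eq_zero_iff (two_ne_zero)] at this
  rw [← hgj] at this
  exact hne (Polynomial.leadingCoeff_eq_zero.mp this)

theorem stmt_12 (d : ℕ) (p : Polynomial ℝ) (hdeg : p.natDegree ≤ 2 * d) :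
    (∃ (k : ℕ) (g : Fin k → Polynomial ℝ), p = ∑ i, (g i) ^ 2) ↔
      ∃ Q : Matrix (Fin (d + 1)) (Fin (d + 1)) ℝ, Q.PosSemidef ∧
        ∀ x : ℝ, p.eval x = ∑ i : Fin (d + 1), ∑ j : Fin (d + 1),
          Q i j * x ^ ((i : ℕ) + (j : ℕ)) := by
  constructor
  · rintro ⟨k, g, rfl⟩
    set B : Matrix (Fin k) (Fin (d+1)) ℝ := fun i j => (g i).coeff j with hB
    refine ⟨Bᵀ * B, ?_, ?_⟩
    · have := Matrix.posSemidef_conjTranspose_mul_self B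
      simpa using this
    · intro x
      rw [← key_sum d k B x]
      simp only [Polynomial.eval_finset_sum, Polynomial.eval_pow]
      refine Finset.sum_congr rfl fun i _ => ?_
      congr 1
      have hd : (g i).natDegree < d + 1 := Nat.lt_succ_of_le (deg_le d k g hdeg i)
      rw [Polynomial.eval_eq_sum_range' hd]
      rw [Fin.sum_univ_eq_sum_range (fun j => (g i).coeff j * x ^ j)]
  · rintro ⟨Q, hQ, hx⟩
    obtain ⟨B, rfl⟩ : ∃ B : Matrix (Fin (d+1)) (Fin (d+1)) ℝ, Q = Bᴴ * B := by
      open scoped MatrixOrder in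
      obtain ⟨X, hX, -, hXQ⟩ := sub_zero Q ▸
        CFC.exists_sqrt_of_isSelfAdjoint_of_quasispectrumRestricts hQ.isHermitian
          (QuasispectrumRestricts.nnreal_of_nonneg hQ.nonneg)
      exact ⟨X, by rw [sub_zero] at hXQ; rw [← hXQ]; change X * X = star X * X; rw [hX.star_eq]⟩
    rw [Matrix.conjTranspose_eq_transpose_of_trivial] at hx
    refine ⟨d + 1, fun i => ∑ j : Fin (d+1), Polynomial.C (B i j) * Polynomial.X ^ (j:ℕ), ?_⟩
    apply Polynomial.funext
    intro x
    rw [hx x, Polynomial.eval_finset_sum, ← key_sum]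
    · refine Finset.sum_congr rfl fun i _ => ?_
      simp [Polynomial.eval_finset_sum]
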